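/- arXiv:2305.02762 — 4 statements merged into one kernel-verified Lean document; each statement's English description precedes it below -/
import Mathlib

section
/- Let k, ℓ, n be integers with 2 ≤ ℓ < k and n ≥ 1000k^8, and let G be a non-bipartite n-vertex {C_3, C_5, …, C_{2ℓ−1}; C_{2k+1}}-free graph whose shortest odd cycle has length 2m+1. Then m ≥ ℓ; moreover, if δ(G) ≥ 2n/(2k+3), then m ≤ k+1 and m ≠ k. -/
open SimpleGraph

/-- `G` contains a cycle with exactly `a` vertices. -/
def HasNCycle {V : Type*} (G : SimpleGraph V) (a : ℕ) : Prop :=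
  ∃ (u : V) (w : G.Walk u u), w.IsCycle ∧ w.length = a

namespace OddCycleAux

open SimpleGraph.Walk

variable {V : Type*} {G : SimpleGraph V}

lemma path_edge_length_one {a b : V} (p : G.Walk a b) (hp : p.IsPath)
    (he : s(b, a) ∈ p.edges) : p.length = 1 := by
  cases p with
  | nil => simp at he
  | @cons a v b h q =>
    rcases (by simpa using he : (b = a ∧ a = v ∨ b = v) ∨ s(b, a) ∈ q.edges) with (⟨rfl, rfl⟩ | rfl) | h2
    · rw [isPath_iff_eq_nil] at hp
      exact absurd hp (by simp)
    · have hq : q.IsPath := hp.of_cons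
      rw [isPath_iff_eq_nil] at hq
      subst hq
      simp
    · have hmem : a ∈ q.support := q.snd_mem_support_of_mem_edges h2
      rw [cons_isPath_iff] at hp
      exact absurd hmem hp.2

lemma length_rotate' [DecidableEq V] {u v : V} (c : G.Walk v v) (h : u ∈ c.support) :
    (c.rotate u h).length = c.length := by
  have h1 := congrArg Walk.length (c.take_spec h)
  rw [Walk.length_append] at h1
  show ((c.dropUntil u h).append (c.takeUntil u h)).length = _
  rw [Walk.length_append]
  omega

lemma exists_odd_cycle_of_odd_closed_walk [DecidableEq V] :
    ∀ (n : ℕ) (u : V) (w : G.Walk u u), w.length = n → Odd n →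
      ∃ a, Odd a ∧ a ≤ n ∧ HasNCycle G a := by
  intro n
  induction n using Nat.strong_induction_on with
  | _ n ih =>
    intro u w hl hodd
    by_cases hnd : w.support.tail.Nodup
    · cases w with
      | nil =>
        simp only [length_nil] at hl
        subst hl
        exact absurd hodd (by simp)
      | @cons u v u' h q =>
        have hq : q.IsPath := IsPath.mk' (by simpa using hnd)
        have hne : s(u, v) ∉ q.edges := by
          intro hcon
          have h1 : q.length = 1 := path_edge_length_one q hq hcon
          simp only [length_cons, h1] at hl
          subst hl
          exact absurd hodd (by decide)
        have hc : (Walk.cons h q).IsCycle := (cons_isCycle_iff q h).mpr ⟨hq, hne⟩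
        exact ⟨n, hodd, le_refl n, u, Walk.cons h q, hc, hl⟩
    · obtain ⟨x, hdup⟩ := List.exists_duplicate_iff_not_nodup.mpr hnd
      have hcount : 2 ≤ w.support.tail.count x := List.duplicate_iff_two_le_count.mp hdup
      have hx : x ∈ w.support := by
        rw [support_eq_cons]
        exact List.mem_cons_of_mem _ hdup.mem
      have hlen : (w.rotate x hx).length = n := by rw [length_rotate' w hx]; exact hl
      have hcnt2 : 2 ≤ (w.rotate x hx).support.tail.count x := by
        rw [(support_rotate w x hx).perm.count_eq]
        exact hcount
      have hn0 : n ≠ 0 := by rintro rfl; exact absurd hodd (by decide)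
      have hcnil : ¬ (w.rotate x hx).Nil := by
        rw [nil_iff_length_eq]
        omega
      obtain ⟨v', hadj, q, hq⟩ := not_nil_iff.mp hcnil
      have hqsupp : (w.rotate x hx).support.tail = q.support := by rw [hq]; simp
      rw [hqsupp] at hcnt2
      have hxq : x ∈ q.support := by
        have : 0 < q.support.count x := by omega
        exact List.count_pos_iff.mp this
      have hsplit : (q.takeUntil x hxq).append (q.dropUntil x hxq) = q := q.take_spec hxq
      have hqlen : q.length + 1 = n := by
        rw [hq] at hlen
        simpa using hlen
      have hlensum : (q.takeUntil x hxq).length + (q.dropUntil x hxq).length = q.length := by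
        have := congrArg Walk.length hsplit
        rwa [Walk.length_append] at this
      have hrpos : 1 ≤ (q.dropUntil x hxq).length := by
        have hcnteq : q.support.count x
            = (q.takeUntil x hxq).support.count x
              + (q.dropUntil x hxq).support.tail.count x := by
          conv_lhs => rw [← hsplit]
          rw [support_append, List.count_append]
        have h1 : (q.takeUntil x hxq).support.count x = 1 :=
          q.count_support_takeUntil_eq_one hxq
        have h2 : 1 ≤ (q.dropUntil x hxq).support.tail.count x := by omega
        have hxmem : x ∈ (q.dropUntil x hxq).support.tail :=
          List.count_pos_iff.mp (by omega)
        by_contra h0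
        have hnil : (q.dropUntil x hxq).Nil := by
          rw [nil_iff_length_eq]; omega
        rw [nil_iff_support_eq] at hnil
        rw [hnil] at hxmem
        simp at hxmem
      set a1 := (q.takeUntil x hxq).length + 1 with ha1
      set a2 := (q.dropUntil x hxq).length with ha2
      have hsum : a1 + a2 = n := by omega
      have hw1 : (Walk.cons hadj (q.takeUntil x hxq)).length = a1 := by simp [ha1]
      rcases Nat.even_or_odd a1 with hev | hod
      · have hodd2 : Odd a2 := by
          rw [Nat.odd_iff] at hodd ⊢
          rw [Nat.even_iff] at hev
          omega
        obtain ⟨a, ha, hale, hcyc⟩ := ih a2 (by omega) x (q.dropUntil x hxq) rfl hodd2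
        exact ⟨a, ha, by omega, hcyc⟩
      · obtain ⟨a, ha, hale, hcyc⟩ := ih a1 (by omega) x (Walk.cons hadj (q.takeUntil x hxq)) hw1 hod
        exact ⟨a, ha, by omega, hcyc⟩

lemma support_getElem_eq_getVert {u v : V} (w : G.Walk u v) (i : ℕ)
    (hi : i < w.support.length) : w.support[i] = w.getVert i := by
  induction w generalizing i with
  | nil =>
    have h0 : i = 0 := by simp at hi; omega
    subst h0
    simp
  | @cons a b c h q ihq =>
    cases i with
    | zero => simp
    | succ j =>
      simp only [support_cons, List.getElem_cons_succ, getVert_cons_succ]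
      exact ihq j (by simpa [length_support] using hi)

lemma support_takeUntil_eq [DecidableEq V] {u v t : V} (w : G.Walk u v) (h : t ∈ w.support) :
    (w.takeUntil t h).support = w.support.take ((w.takeUntil t h).length + 1) := by
  have hs : (w.takeUntil t h).support ++ (w.dropUntil t h).support.tail = w.support := by
    rw [← support_append, w.take_spec h]
  calc (w.takeUntil t h).support
      = ((w.takeUntil t h).support ++ (w.dropUntil t h).support.tail).take
          ((w.takeUntil t h).support.length) := List.take_left.symm
    _ = w.support.take ((w.takeUntil t h).length + 1) := by rw [hs, length_support]

lemma getVert_length_takeUntil [DecidableEq V] {u v t : V} (w : G.Walk u v)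
    (h : t ∈ w.support) : w.getVert ((w.takeUntil t h).length) = t := by
  have hs : (w.takeUntil t h).support ++ (w.dropUntil t h).support.tail = w.support := by
    rw [← support_append, w.take_spec h]
  have hlen : (w.takeUntil t h).length ≤ w.length := w.length_takeUntil_le h
  have hb : (w.takeUntil t h).length < w.support.length := by rw [length_support]; omega
  have h1 : w.support[(w.takeUntil t h).length] = w.getVert ((w.takeUntil t h).length) :=
    support_getElem_eq_getVert w _ hb
  have hb2 : (w.takeUntil t h).length < (w.takeUntil t h).support.length := by
    rw [length_support]; omega
  have h2 : (w.takeUntil t h).support[(w.takeUntil t h).length] =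
      (w.takeUntil t h).getVert ((w.takeUntil t h).length) :=
    support_getElem_eq_getVert _ _ hb2
  calc w.getVert ((w.takeUntil t h).length)
      = w.support[(w.takeUntil t h).length]'hb := h1.symm
    _ = ((w.takeUntil t h).support ++ (w.dropUntil t h).support.tail)[(w.takeUntil t h).length]'(by
          rw [hs]; exact hb) := List.getElem_of_eq hs.symm hb
    _ = (w.takeUntil t h).support[(w.takeUntil t h).length]'hb2 := List.getElem_append_left hb2
    _ = (w.takeUntil t h).getVert ((w.takeUntil t h).length) := h2
    _ = t := getVert_length _

lemma cycle_getVert_inj {x : V} {c : G.Walk x x} (hc : c.IsCycle) {i j : ℕ}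
    (hi : 1 ≤ i) (hi' : i ≤ c.length) (hj : 1 ≤ j) (hj' : j ≤ c.length)
    (h : c.getVert i = c.getVert j) : i = j := by
  have hnd : c.support.tail.Nodup := ((Walk.isCycle_def c).mp hc).2.2
  have htl : c.support.tail.length = c.length := by
    have h4 := length_support c
    rw [support_eq_cons] at h4
    simpa using h4
  have key : ∀ p : ℕ, (hp : p + 1 ≤ c.length) →
      c.support.tail[p]'(by rw [htl]; omega) = c.getVert (p + 1) := by
    intro p hp
    have hb : p + 1 < c.support.length := by rw [length_support]; omega
    have h1 : c.support[p + 1] = c.getVert (p + 1) := support_getElem_eq_getVert c _ hb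
    rw [← h1]
    exact List.getElem_tail _
  obtain ⟨p, rfl⟩ : ∃ p, i = p + 1 := ⟨i - 1, by omega⟩
  obtain ⟨q, rfl⟩ : ∃ q, j = q + 1 := ⟨j - 1, by omega⟩
  have e1 := key p hi'
  have e2 := key q hj'
  have h5 : c.support.tail[p]'(by rw [htl]; omega) = c.support.tail[q]'(by rw [htl]; omega) := by
    rw [e1, e2, h]
  have := (hnd.getElem_inj_iff).mp h5
  omega

lemma mem_tail_of_mem_support {a y : V} {w : G.Walk a a} (hw : ¬ w.Nil)
    (hy : y ∈ w.support) : y ∈ w.support.tail := by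
  obtain ⟨v', hadj, q, rfl⟩ := not_nil_iff.mp hw
  simp only [support_cons, List.tail_cons]
  rcases (by simpa using hy : y = a ∨ y ∈ q.support) with rfl | h
  · exact q.end_mem_support
  · exact h

lemma mem_support_rotate [DecidableEq V] {a x y : V} {w : G.Walk a a} (hw : ¬ w.Nil)
    (hx : x ∈ w.support) (hy : y ∈ w.support) : y ∈ (w.rotate x hx).support := by
  have h1 : y ∈ w.support.tail := mem_tail_of_mem_support hw hy
  have h2 : y ∈ (w.rotate x hx).support.tail := (support_rotate w x hx).mem_iff.mpr h1
  rw [support_eq_cons]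
  exact List.mem_cons_of_mem _ h2

lemma no_short_closed_walk [DecidableEq V] {L : ℕ}
    (hshort : ∀ a, Odd a → a < L → ¬ HasNCycle G a)
    {v : V} (W : G.Walk v v) (ho : Odd W.length) (hlt : W.length < L) : False := by
  obtain ⟨a, ha, hale, hcyc⟩ :=
    exists_odd_cycle_of_odd_closed_walk W.length v W rfl ho
  exact hshort a ha (lt_of_le_of_lt hale hlt) hcyc

lemma arc_lemma [DecidableEq V] {x v : V} {c : G.Walk x x} (hodd : Odd c.length)
    (hshort : ∀ a, Odd a → a < c.length → ¬ HasNCycle G a)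
    {t : V} (ht : t ∈ c.support) (htx : t ≠ x)
    (hvx : G.Adj v x) (hvt : G.Adj v t) :
    (c.takeUntil t ht).length = 2 ∨ (c.takeUntil t ht).length = c.length - 2 := by
  have hsum : (c.takeUntil t ht).length + (c.dropUntil t ht).length = c.length := by
    have h1 := congrArg Walk.length (c.take_spec ht)
    rwa [Walk.length_append] at h1
  have hd1 : 1 ≤ (c.takeUntil t ht).length := by
    rcases Nat.eq_zero_or_pos (c.takeUntil t ht).length with h0 | h0
    · exact absurd (eq_of_length_eq_zero h0).symm htx
    · omega
  have he1 : 1 ≤ (c.dropUntil t ht).length := by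
    rcases Nat.eq_zero_or_pos (c.dropUntil t ht).length with h0 | h0
    · exact absurd (eq_of_length_eq_zero h0) htx
    · omega
  set W1 : G.Walk v v := Walk.cons hvx ((c.takeUntil t ht).append (Walk.cons hvt.symm Walk.nil))
    with hW1
  have hW1len : W1.length = (c.takeUntil t ht).length + 2 := by
    simp [hW1, Walk.length_append]
  set W2 : G.Walk v v := Walk.cons hvt ((c.dropUntil t ht).append (Walk.cons hvx.symm Walk.nil))
    with hW2
  have hW2len : W2.length = (c.dropUntil t ht).length + 2 := by
    simp [hW2, Walk.length_append]
  rw [Nat.odd_iff] at hodd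
  rcases Nat.even_or_odd (c.takeUntil t ht).length with hev | hod
  · left
    rw [Nat.even_iff] at hev
    by_contra hne
    refine no_short_closed_walk hshort W2 ?_ ?_
    · rw [Nat.odd_iff, hW2len]; omega
    · omega
  · right
    rw [Nat.odd_iff] at hod
    by_contra hne
    refine no_short_closed_walk hshort W1 ?_ ?_
    · rw [Nat.odd_iff, hW1len]; omega
    · omega

lemma cross_false [DecidableEq V] {x v : V} {c : G.Walk x x} (hc : c.IsCycle)
    (hodd : Odd c.length) (hL : 5 ≤ c.length)
    (hshort : ∀ a, Odd a → a < c.length → ¬ HasNCycle G a)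
    {y z : V} (hy : y ∈ c.support) (hz : z ∈ c.support)
    (hyx : y ≠ x) (hzx : z ≠ x)
    (hvy : G.Adj v y) (hvz : G.Adj v z)
    (hdy : (c.takeUntil y hy).length = 2)
    (hdz : (c.takeUntil z hz).length = c.length - 2) : False := by
  have htlen : (c.takeUntil z hz).length ≤ c.length := c.length_takeUntil_le hz
  -- y is on the takeUntil-z part
  have hyt : y ∈ (c.takeUntil z hz).support := by
    rw [support_takeUntil_eq]
    have hy' : y ∈ (c.takeUntil y hy).support := Walk.end_mem_support _
    rw [support_takeUntil_eq, hdy] at hy'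
    have h3 : c.support.take 3 = (c.support.take ((c.takeUntil z hz).length + 1)).take 3 := by
      rw [List.take_take]
      congr 1
      omega
    rw [h3] at hy'
    exact List.take_subset _ _ hy'
  set s := ((c.takeUntil z hz).takeUntil y hyt).length with hss
  have hslet : s ≤ (c.takeUntil z hz).length := (c.takeUntil z hz).length_takeUntil_le hyt
  have hcg : ∀ i, i ≤ (c.takeUntil z hz).length →
      c.getVert i = (c.takeUntil z hz).getVert i := by
    intro i hi
    have h1 := congrArg Walk.length (c.take_spec hz)
    rw [Walk.length_append] at h1
    conv_lhs => rw [← c.take_spec hz]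
    rw [getVert_append]
    split
    · rfl
    · have hieq : i = (c.takeUntil z hz).length := by omega
      subst hieq
      rw [Nat.sub_self, getVert_zero, getVert_length]
  have h1 : c.getVert s = y := by
    rw [hcg s hslet]
    exact getVert_length_takeUntil (c.takeUntil z hz) hyt
  have h2 : c.getVert 2 = y := by
    rw [← hdy]
    exact getVert_length_takeUntil c hy
  have hs1 : 1 ≤ s := by
    rcases Nat.eq_zero_or_pos s with h0 | h0
    · exact absurd (eq_of_length_eq_zero h0).symm hyx
    · omega
  have hseq : s = 2 :=
    cycle_getVert_inj hc hs1 (by omega) (by omega) (by omega) (h1.trans h2.symm)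
  have hqlen : ((c.takeUntil z hz).dropUntil y hyt).length = c.length - 4 := by
    have h4 := congrArg Walk.length ((c.takeUntil z hz).take_spec hyt)
    rw [Walk.length_append] at h4
    omega
  set W : G.Walk v v := Walk.cons hvy (((c.takeUntil z hz).dropUntil y hyt).append (Walk.cons hvz.symm Walk.nil))
    with hW
  have hWlen : W.length = c.length - 2 := by
    simp only [hW, Walk.length_cons, Walk.length_append, Walk.length_nil, hqlen]
    omega
  rw [Nat.odd_iff] at hodd
  refine no_short_closed_walk hshort W ?_ ?_
  · rw [Nat.odd_iff, hWlen]; omega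
  · omega

lemma no_three_neighbors [DecidableEq V] {u v : V} {c0 : G.Walk u u} (hc : c0.IsCycle)
    (hodd : Odd c0.length) (hL : 5 ≤ c0.length)
    (hshort : ∀ a, Odd a → a < c0.length → ¬ HasNCycle G a)
    {x y z : V} (hx : x ∈ c0.support) (hy : y ∈ c0.support) (hz : z ∈ c0.support)
    (hxy : x ≠ y) (hxz : x ≠ z) (hyz : y ≠ z)
    (hvx : G.Adj v x) (hvy : G.Adj v y) (hvz : G.Adj v z) : False := by
  have hnil : ¬ c0.Nil := hc.not_nil
  have hcyc : (c0.rotate x hx).IsCycle := hc.rotate hx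
  have hlen : (c0.rotate x hx).length = c0.length := length_rotate' c0 hx
  have hy' : y ∈ (c0.rotate x hx).support := mem_support_rotate hnil hx hy
  have hz' : z ∈ (c0.rotate x hx).support := mem_support_rotate hnil hx hz
  have hody : Odd (c0.rotate x hx).length := by rwa [hlen]
  have hshort' : ∀ a, Odd a → a < (c0.rotate x hx).length → ¬ HasNCycle G a := by
    rw [hlen]; exact hshort
  have hay := arc_lemma hody hshort' hy' hxy.symm hvx hvy
  have haz := arc_lemma hody hshort' hz' hxz.symm hvx hvz
  have hne : ((c0.rotate x hx).takeUntil y hy').length ≠ ((c0.rotate x hx).takeUntil z hz').length := by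
    intro heq
    apply hyz
    have e1 := getVert_length_takeUntil (c0.rotate x hx) hy'
    have e2 := getVert_length_takeUntil (c0.rotate x hx) hz'
    rw [← e1, ← e2, heq]
  have hL' : 5 ≤ (c0.rotate x hx).length := by omega
  rcases hay with h1 | h1 <;> rcases haz with h2 | h2
  · exact hne (by omega)
  · exact cross_false hcyc hody hL' hshort' hy' hz' hxy.symm hxz.symm hvy hvz h1 h2
  · exact cross_false hcyc hody hL' hshort' hz' hy' hxz.symm hxy.symm hvz hvy h2 h1
  · exact hne (by omega)

lemma counting [Fintype V] [DecidableRel G.Adj] {u : V} {c0 : G.Walk u u} (hc : c0.IsCycle)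
    (hodd : Odd c0.length) (hL : 5 ≤ c0.length)
    (hshort : ∀ a, Odd a → a < c0.length → ¬ HasNCycle G a) :
    c0.length * G.minDegree ≤ 2 * Fintype.card V := by
  classical
  set S : Finset V := c0.support.tail.toFinset with hS
  have hnd : c0.support.tail.Nodup := ((Walk.isCycle_def c0).mp hc).2.2
  have htl : c0.support.tail.length = c0.length := by
    have h4 := length_support c0
    rw [support_eq_cons] at h4
    simpa using h4
  have hcard : S.card = c0.length := by
    rw [hS, List.toFinset_card_of_nodup hnd, htl]
  have hsub : ∀ w ∈ S, w ∈ c0.support := by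
    intro w hw
    rw [hS, List.mem_toFinset] at hw
    rw [support_eq_cons]
    exact List.mem_cons_of_mem _ hw
  have h3 : ∀ v : V, (S.filter (fun w => G.Adj v w)).card ≤ 2 := by
    intro v
    by_contra hgt
    push_neg at hgt
    obtain ⟨x, hxm, y, hym, z, hzm, hxy, hxz, hyz⟩ := Finset.two_lt_card.mp hgt
    rw [Finset.mem_filter] at hxm hym hzm
    exact no_three_neighbors hc hodd hL hshort (hsub x hxm.1) (hsub y hym.1) (hsub z hzm.1)
      hxy hxz hyz hxm.2 hym.2 hzm.2
  have h2 : ∑ w ∈ S, G.degree w = ∑ v ∈ Finset.univ, (S.filter (fun w => G.Adj v w)).card := by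
    have e1 : ∀ w, G.degree w = ∑ v ∈ Finset.univ, if G.Adj w v then 1 else 0 := by
      intro w
      rw [← SimpleGraph.card_neighborFinset_eq_degree, neighborFinset_eq_filter,
        Finset.card_filter]
    calc ∑ w ∈ S, G.degree w
        = ∑ w ∈ S, ∑ v ∈ Finset.univ, if G.Adj w v then 1 else 0 := by
          exact Finset.sum_congr rfl fun w _ => e1 w
      _ = ∑ v ∈ Finset.univ, ∑ w ∈ S, if G.Adj w v then 1 else 0 := Finset.sum_comm
      _ = ∑ v ∈ Finset.univ, (S.filter (fun w => G.Adj v w)).card := by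
          refine Finset.sum_congr rfl fun v _ => ?_
          rw [Finset.card_filter]
          refine Finset.sum_congr rfl fun w _ => ?_
          by_cases hwv : G.Adj w v
          · simp [hwv, hwv.symm]
          · have hvw : ¬ G.Adj v w := fun h => hwv h.symm
            simp [hwv, hvw]
  have h1 : c0.length * G.minDegree ≤ ∑ w ∈ S, G.degree w := by
    calc c0.length * G.minDegree = ∑ _w ∈ S, G.minDegree := by
          rw [Finset.sum_const, hcard, smul_eq_mul]
      _ ≤ ∑ w ∈ S, G.degree w := Finset.sum_le_sum fun w _ => G.minDegree_le_degree w
  have h4 : ∑ v ∈ Finset.univ, (S.filter (fun w => G.Adj v w)).card ≤ 2 * Fintype.card V := by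
    calc ∑ v ∈ Finset.univ, (S.filter (fun w => G.Adj v w)).card
        ≤ ∑ _v ∈ (Finset.univ : Finset V), 2 := Finset.sum_le_sum fun v _ => h3 v
      _ = 2 * Fintype.card V := by rw [Finset.sum_const, smul_eq_mul, Finset.card_univ]; ring
  omega

end OddCycleAux

/-- Claim 2.3, part (i). Let `k, ℓ, n` be integers with `2 ≤ ℓ < k` and
`n ≥ 1000k⁸`, and let `G` be a non-bipartite `n`-vertex
`{C₃, C₅, …, C_{2ℓ−1}; C_{2k+1}}`-free graph whose shortest odd cycle has length `2m+1`.
Then `m ≥ ℓ`; moreover, if `δ(G) ≥ 2n/(2k+3)`, then `m ≤ k+1` and `m ≠ k`. -/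
theorem shortest_odd_cycle_length_bounds
    {V : Type*} [Fintype V] (G : SimpleGraph V) [DecidableRel G.Adj]
    (k ℓ m n : ℕ) (hℓ : 2 ≤ ℓ) (hℓk : ℓ < k) (hn : 1000 * k ^ 8 ≤ n)
    (hcard : Fintype.card V = n)
    (hfreeShort : ∀ a : ℕ, Odd a → 3 ≤ a → a < 2 * ℓ + 1 → ¬ HasNCycle G a)
    (hfreeLong : ¬ HasNCycle G (2 * k + 1))
    (hnonbip : ¬ G.Colorable 2)
    (hcyc : HasNCycle G (2 * m + 1))
    (hshortest : ∀ a : ℕ, Odd a → a < 2 * m + 1 → ¬ HasNCycle G a) :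
    ℓ ≤ m ∧
      (2 * (n : ℝ) / (2 * k + 3) ≤ (G.minDegree : ℝ) → m ≤ k + 1 ∧ m ≠ k) := by
  classical
  obtain ⟨u, w, hwc, hwl⟩ := hcyc
  have hm1 : 1 ≤ m := by
    have h3 := hwc.three_le_length
    omega
  have hlm : ℓ ≤ m := by
    by_contra hlt
    push_neg at hlt
    exact hfreeShort (2 * m + 1) ⟨m, by omega⟩ (by omega) (by omega) ⟨u, w, hwc, hwl⟩
  refine ⟨hlm, fun hδ => ⟨?_, ?_⟩⟩
  · -- m ≤ k + 1
    have hL5 : 5 ≤ w.length := by rw [hwl]; omega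
    have hoddw : Odd w.length := by rw [hwl]; exact ⟨m, by omega⟩
    have hshort' : ∀ a, Odd a → a < w.length → ¬ HasNCycle G a := by
      rw [hwl]; exact hshortest
    have hcount := OddCycleAux.counting hwc hoddw hL5 hshort'
    rw [hwl, hcard] at hcount
    -- now real arithmetic
    have hk3 : 3 ≤ k := by omega
    have hn0 : 0 < n := by
      have : 0 < 1000 * k ^ 8 := by positivity
      omega
    by_contra hmk
    push_neg at hmk
    have hc : ((2 * m + 1 : ℕ) : ℝ) * (G.minDegree : ℝ) ≤ 2 * (n : ℝ) := by
      exact_mod_cast hcount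
    have hpos : (0 : ℝ) < 2 * (k : ℝ) + 3 := by positivity
    have hnp : (0 : ℝ) < (n : ℝ) := by exact_mod_cast hn0
    have hm2 : (2 * (k : ℝ) + 5) ≤ ((2 * m + 1 : ℕ) : ℝ) := by
      push_cast
      have : k + 2 ≤ m := by omega
      have : ((k : ℝ)) + 2 ≤ (m : ℝ) := by exact_mod_cast this
      linarith
    set D : ℝ := 2 * (n : ℝ) / (2 * k + 3) with hD
    have hDpos : 0 < D := by rw [hD]; positivity
    have hDeq : D * (2 * (k : ℝ) + 3) = 2 * (n : ℝ) := by
      rw [hD]; field_simp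
    have key : ((2 * m + 1 : ℕ) : ℝ) * D ≤ 2 * (n : ℝ) := by
      calc ((2 * m + 1 : ℕ) : ℝ) * D
          ≤ ((2 * m + 1 : ℕ) : ℝ) * (G.minDegree : ℝ) := by
            apply mul_le_mul_of_nonneg_left hδ
            positivity
        _ ≤ 2 * (n : ℝ) := hc
    nlinarith [mul_le_mul_of_nonneg_right hm2 hDpos.le]
  · rintro rfl
    exact hfreeLong ⟨u, w, hwc, hwl⟩
end

section
/- Let k, ℓ, n be integers with 2 ≤ ℓ < k, 8ℓ < 2k−1, and n ≥ 1000k^8, and let G be a non-bipartite n-vertex {C_3, C_5, …, C_{2ℓ−1}; C_{2k+1}}-free graph whose shortest odd cycle has length 2m+1. If δ(G) ≥ n/(2(2ℓ+1)), then m ≤ k−1. -/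
open SimpleGraph

section AuxLemmas

variable {V : Type*} [DecidableEq V] {G : SimpleGraph V}

set_option linter.unusedSectionVars false

private lemma closed_walk_length_ne_one' {u : V} (w : G.Walk u u) : w.length ≠ 1 := by
  cases w with
  | nil => simp
  | cons h p =>
    intro hl
    rw [Walk.length_cons] at hl
    have h0 : p.length = 0 := by omega
    have := Walk.eq_of_length_eq_zero h0
    subst this
    exact G.irrefl h

private lemma edge_not_mem_of_path' {y u : V} (p : G.Walk y u) (hnd : p.support.Nodup)
    (hlen : 2 ≤ p.length) : s(u, y) ∉ p.edges := by
  intro he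
  cases p with
  | nil => simp at hlen
  | cons h q =>
    rw [Walk.edges_cons, List.mem_cons] at he
    rw [Walk.support_cons, List.nodup_cons] at hnd
    rcases he with he | he
    · rw [Sym2.eq_iff] at he
      rcases he with ⟨hu, hy⟩ | ⟨hu, _⟩
      · exact hnd.1 (by rw [← hu]; exact q.end_mem_support)
      · subst hu
        cases q with
        | nil => rw [Walk.length_cons, Walk.length_nil] at hlen; omega
        | cons h' r =>
          have h2 := hnd.2
          rw [Walk.support_cons, List.nodup_cons] at h2
          exact h2.1 r.end_mem_support
    · exact hnd.1 (q.snd_mem_support_of_mem_edges he)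

private lemma isCycle_of_nodup' {u : V} (w : G.Walk u u) (hnd : w.support.tail.Nodup)
    (hlen : 3 ≤ w.length) : w.IsCycle := by
  cases w with
  | nil => simp at hlen
  | cons h p =>
    rw [Walk.cons_isCycle_iff]
    rw [Walk.support_cons, List.tail_cons] at hnd
    rw [Walk.length_cons] at hlen
    exact ⟨(Walk.isPath_def _).2 hnd, edge_not_mem_of_path' p hnd (by omega)⟩

private lemma split_closed_walk' {x : V} (w : G.Walk x x) (hc : 2 ≤ w.support.tail.count x) :
    ∃ (c1 c2 : G.Walk x x), c1.length + c2.length = w.length ∧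
      1 ≤ c1.length ∧ 1 ≤ c2.length := by
  cases w with
  | nil => simp at hc
  | cons h p =>
    rw [Walk.support_cons, List.tail_cons] at hc
    have hx : x ∈ p.support := by
      rw [← List.count_pos_iff]; omega
    refine ⟨Walk.cons h (p.takeUntil x hx), p.dropUntil x hx, ?_, ?_, ?_⟩
    · have := congrArg Walk.length (p.take_spec hx)
      rw [Walk.length_append] at this
      rw [Walk.length_cons, Walk.length_cons]
      omega
    · rw [Walk.length_cons]; omega
    · have hsupp := congrArg Walk.support (p.take_spec hx)
      rw [Walk.support_append] at hsupp
      have hcount : (p.takeUntil x hx).support.count x = 1 :=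
        p.count_support_takeUntil_eq_one hx
      have hle : 1 ≤ ((p.dropUntil x hx).support.tail).count x := by
        have := congrArg (List.count x) hsupp
        rw [List.count_append] at this
        omega
      have hne : (p.dropUntil x hx).support.tail ≠ [] := by
        intro hnil; rw [hnil] at hle; simp at hle
      have hls := Walk.length_support (p.dropUntil x hx)
      rcases Nat.eq_zero_or_pos (p.dropUntil x hx).length with h0 | h0
      · exfalso; apply hne
        have h1 : (p.dropUntil x hx).support.length = 1 := by omega
        cases hs : (p.dropUntil x hx).support with
        | nil => simp [hs] at h1
        | cons a l => rw [hs] at h1; simp at h1; simp [h1]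
      · exact h0

private lemma exists_odd_cycle_of_odd_closed_walk' :
    ∀ (N : ℕ) {u : V} (w : G.Walk u u), w.length ≤ N → Odd w.length →
      ∃ (x : V) (c : G.Walk x x), c.IsCycle ∧ Odd c.length ∧ c.length ≤ w.length := by
  intro N
  induction N with
  | zero =>
    intro u w hle hodd
    rw [Nat.le_zero] at hle
    rw [hle] at hodd
    exact absurd hodd (by decide)
  | succ N ih =>
    intro u w hle hodd
    by_cases hnd : w.support.tail.Nodup
    · refine ⟨u, w, isCycle_of_nodup' w hnd ?_, hodd, le_rfl⟩
      have h1 := closed_walk_length_ne_one' w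
      rw [Nat.odd_iff] at hodd
      omega
    · obtain ⟨y, hdup⟩ := List.exists_duplicate_iff_not_nodup.mpr hnd
      have hcnt : 2 ≤ w.support.tail.count y := List.duplicate_iff_two_le_count.mp hdup
      have hy : y ∈ w.support := List.mem_of_mem_tail hdup.mem
      set w' := w.rotate y hy with hw'
      have hlen' : w'.length = w.length := by
        have := congrArg Walk.length (w.take_spec hy)
        rw [Walk.length_append] at this
        rw [hw', Walk.rotate, Walk.length_append]
        omega
      have hcnt' : 2 ≤ w'.support.tail.count y := by
        have hperm := (w.support_rotate y hy).perm
        rw [hperm.count_eq]; exact hcnt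
      obtain ⟨c1, c2, hsum, h1, h2⟩ := split_closed_walk' w' hcnt'
      rw [hlen'] at hsum
      rw [Nat.odd_iff] at hodd
      rcases Nat.even_or_odd c1.length with he | ho
      · have hodd2 : Odd c2.length := by
          rw [Nat.even_iff] at he; rw [Nat.odd_iff]; omega
        obtain ⟨x, c, hc, hco, hcl⟩ := ih c2 (by omega) hodd2
        exact ⟨x, c, hc, hco, by omega⟩
      · obtain ⟨x, c, hc, hco, hcl⟩ := ih c1 (by omega) ho
        exact ⟨x, c, hc, hco, by omega⟩

private lemma one_le_length_of_ne' {u v : V} (p : G.Walk u v) (h : u ≠ v) : 1 ≤ p.length := by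
  rcases Nat.eq_zero_or_pos p.length with h0 | h0
  · exact absurd (Walk.eq_of_length_eq_zero h0) h
  · exact h0

private lemma glue_walks' {x a b c : V} (hxa : G.Adj x a) (hxb : G.Adj x b) (hxc : G.Adj x c)
    (P1 : G.Walk a b) (P2 : G.Walk b c) (P3 : G.Walk c a)
    (h1 : 1 ≤ P1.length) (h2 : 1 ≤ P2.length) (h3 : 1 ≤ P3.length)
    {L : ℕ} (hsum : P1.length + P2.length + P3.length = L) (hodd : Odd L) (hlen : 7 ≤ L) :
    ∃ (W : G.Walk x x), Odd W.length ∧ W.length < L := by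
  rw [Nat.odd_iff] at hodd
  have hcase : (P1.length % 2 = 1 ∧ P1.length + 3 ≤ L) ∨
      (P2.length % 2 = 1 ∧ P2.length + 3 ≤ L) ∨
      (P3.length % 2 = 1 ∧ P3.length + 3 ≤ L) := by omega
  rcases hcase with ⟨ho, hl⟩ | ⟨ho, hl⟩ | ⟨ho, hl⟩
  · refine ⟨Walk.cons hxa (P1.append (Walk.cons hxb.symm Walk.nil)), ?_, ?_⟩ <;>
      simp [Walk.length_cons, Walk.length_append, Nat.odd_iff] <;> omega
  · refine ⟨Walk.cons hxb (P2.append (Walk.cons hxc.symm Walk.nil)), ?_, ?_⟩ <;>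
      simp [Walk.length_cons, Walk.length_append, Nat.odd_iff] <;> omega
  · refine ⟨Walk.cons hxc (P3.append (Walk.cons hxa.symm Walk.nil)), ?_, ?_⟩ <;>
      simp [Walk.length_cons, Walk.length_append, Nat.odd_iff] <;> omega

private lemma exists_short_odd_closed_walk' {a b c x : V} (w : G.Walk a a)
    (hb : b ∈ w.support) (hc : c ∈ w.support)
    (hab : a ≠ b) (hac : a ≠ c) (hbc : b ≠ c)
    (hxa : G.Adj x a) (hxb : G.Adj x b) (hxc : G.Adj x c)
    (hodd : Odd w.length) (hlen : 7 ≤ w.length) :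
    ∃ (W : G.Walk x x), Odd W.length ∧ W.length < w.length := by
  have hsplit := congrArg Walk.length (w.take_spec hb)
  rw [Walk.length_append] at hsplit
  by_cases hcc : c ∈ (w.takeUntil b hb).support
  · have hq := congrArg Walk.length ((w.takeUntil b hb).take_spec hcc)
    rw [Walk.length_append] at hq
    refine glue_walks' hxa hxc hxb ((w.takeUntil b hb).takeUntil c hcc)
      ((w.takeUntil b hb).dropUntil c hcc) (w.dropUntil b hb) ?_ ?_ ?_ ?_ hodd hlen
    · exact one_le_length_of_ne' _ hac
    · exact one_le_length_of_ne' _ (fun h => hbc h.symm)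
    · exact one_le_length_of_ne' _ (fun h => hab h.symm)
    · omega
  · have hc2 : c ∈ (w.dropUntil b hb).support := by
      have hsupp := congrArg Walk.support (w.take_spec hb)
      rw [Walk.support_append] at hsupp
      rw [← hsupp] at hc
      rcases List.mem_append.mp hc with h | h
      · exact absurd h hcc
      · exact List.mem_of_mem_tail h
    have hq := congrArg Walk.length ((w.dropUntil b hb).take_spec hc2)
    rw [Walk.length_append] at hq
    refine glue_walks' hxa hxb hxc (w.takeUntil b hb)
      ((w.dropUntil b hb).takeUntil c hc2) ((w.dropUntil b hb).dropUntil c hc2)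
      ?_ ?_ ?_ ?_ hodd hlen
    · exact one_le_length_of_ne' _ hab
    · exact one_le_length_of_ne' _ hbc
    · exact one_le_length_of_ne' _ (fun h => hac h.symm)
    · omega

end AuxLemmas

/-- Claim 2.3, part (ii). Let `k, ℓ, n` be integers with `2 ≤ ℓ < k`,
`8ℓ < 2k - 1`, and `n ≥ 1000k⁸`, and let `G` be a non-bipartite `n`-vertex
`{C₃, C₅, …, C_{2ℓ−1}; C_{2k+1}}`-free graph whose shortest odd cycle has length `2m+1`.
If `δ(G) ≥ n/(2(2ℓ+1))`, then `m ≤ k - 1`. -/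
theorem shortest_odd_cycle_length_upper_bound
    {V : Type*} [Fintype V] (G : SimpleGraph V) [DecidableRel G.Adj]
    (k ℓ m n : ℕ) (hℓ : 2 ≤ ℓ) (hℓk : ℓ < k) (hrange : 8 * ℓ + 1 < 2 * k)
    (hn : 1000 * k ^ 8 ≤ n) (hcard : Fintype.card V = n)
    (hfreeShort : ∀ a : ℕ, Odd a → 3 ≤ a → a < 2 * ℓ + 1 → ¬ HasNCycle G a)
    (hfreeLong : ¬ HasNCycle G (2 * k + 1))
    (hnonbip : ¬ G.Colorable 2)
    (hcyc : HasNCycle G (2 * m + 1))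
    (hshortest : ∀ a : ℕ, Odd a → a < 2 * m + 1 → ¬ HasNCycle G a)
    (hdeg : (n : ℝ) / (2 * (2 * ℓ + 1)) ≤ (G.minDegree : ℝ)) :
    m ≤ k - 1 := by
  classical
  by_contra hmk
  have hk9 : 9 ≤ k := by omega
  have hm0 : k ≤ m := by omega
  have hm : k + 1 ≤ m := by
    rcases eq_or_lt_of_le hm0 with he | hl
    · exfalso; subst he; exact hfreeLong hcyc
    · omega
  obtain ⟨u, w, hwc, hwl⟩ := hcyc
  set T : Finset V := w.support.tail.toFinset with hT
  have hTcard : T.card = 2 * m + 1 := by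
    rw [hT, List.card_toFinset, hwc.support_nodup.dedup]
    have htl : w.support.tail.length = w.length := by
      rw [List.length_tail, Walk.length_support]
      omega
    rw [htl, hwl]
  -- Key claim: every vertex has at most 2 neighbors among the cycle vertices.
  have hkey : ∀ x : V, (T.filter (fun v => G.Adj x v)).card ≤ 2 := by
    intro x
    by_contra hgt
    push_neg at hgt
    obtain ⟨a, b, c, ha, hb, hc, hab, hac, hbc⟩ := Finset.two_lt_card_iff.mp hgt
    simp only [Finset.mem_filter] at ha hb hc
    have haT : a ∈ w.support.tail := by
      have := ha.1; rwa [hT, List.mem_toFinset] at this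
    have hbT : b ∈ w.support.tail := by
      have := hb.1; rwa [hT, List.mem_toFinset] at this
    have hcT : c ∈ w.support.tail := by
      have := hc.1; rwa [hT, List.mem_toFinset] at this
    have ha' : a ∈ w.support := List.mem_of_mem_tail haT
    set wa := w.rotate a ha' with hwa
    have hperm := (w.support_rotate a ha').perm
    have hwal : wa.length = w.length := by
      have := congrArg Walk.length (w.take_spec ha')
      rw [Walk.length_append] at this
      rw [hwa, Walk.rotate, Walk.length_append]
      omega
    have hbw : b ∈ wa.support := List.mem_of_mem_tail (hperm.mem_iff.mpr hbT)
    have hcw : c ∈ wa.support := List.mem_of_mem_tail (hperm.mem_iff.mpr hcT)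
    obtain ⟨W, hWodd, hWlt⟩ := exists_short_odd_closed_walk' wa hbw hcw hab hac hbc
      ha.2 hb.2 hc.2 (by rw [hwal, hwl]; exact ⟨m, by ring⟩) (by rw [hwal, hwl]; omega)
    rw [hwal, hwl] at hWlt
    obtain ⟨x0, c0, hc0, hc0odd, hc0le⟩ :=
      exists_odd_cycle_of_odd_closed_walk' W.length W le_rfl hWodd
    exact hshortest c0.length hc0odd (by omega) ⟨x0, c0, hc0, rfl⟩
  -- Degree counting: (2m+1) * minDegree ≤ 2n
  have hdegsum : (2 * m + 1) * G.minDegree ≤ 2 * n := by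
    have h1 : T.card * G.minDegree ≤ ∑ v ∈ T, G.degree v := by
      calc T.card * G.minDegree = ∑ _v ∈ T, G.minDegree := by
            rw [Finset.sum_const, smul_eq_mul]
        _ ≤ ∑ v ∈ T, G.degree v := Finset.sum_le_sum (fun v _ => G.minDegree_le_degree v)
    have h2 : ∑ v ∈ T, G.degree v = ∑ x : V, (T.filter (fun v => G.Adj x v)).card := by
      simp_rw [degree, neighborFinset_eq_filter, Finset.card_filter]
      rw [Finset.sum_comm]
      simp_rw [G.adj_comm]
    have h3 : ∑ x : V, (T.filter (fun v => G.Adj x v)).card ≤ ∑ _x : V, 2 :=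
      Finset.sum_le_sum (fun x _ => hkey x)
    have h4 : ∑ _x : V, (2 : ℕ) = 2 * n := by
      rw [Finset.sum_const, smul_eq_mul, Finset.card_univ, hcard, mul_comm]
    rw [hTcard] at h1
    omega
  -- Final arithmetic
  have hk0 : 0 < k := by omega
  have hn0 : 0 < n := lt_of_lt_of_le (by positivity) hn
  have hn0R : (0 : ℝ) < n := by exact_mod_cast hn0
  have hD : (0 : ℝ) < 2 * (2 * (ℓ : ℝ) + 1) := by positivity
  have hreal : ((2 * m + 1 : ℕ) : ℝ) * ((n : ℝ) / (2 * (2 * (ℓ : ℝ) + 1))) ≤ 2 * n := by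
    calc ((2 * m + 1 : ℕ) : ℝ) * ((n : ℝ) / (2 * (2 * (ℓ : ℝ) + 1)))
        ≤ ((2 * m + 1 : ℕ) : ℝ) * G.minDegree := by
          exact mul_le_mul_of_nonneg_left hdeg (by positivity)
      _ ≤ 2 * n := by exact_mod_cast hdegsum
  have hclear : ((2 * m + 1 : ℕ) : ℝ) * n ≤ 2 * n * (2 * (2 * (ℓ : ℝ) + 1)) := by
    have h := mul_le_mul_of_nonneg_right hreal hD.le
    calc ((2 * m + 1 : ℕ) : ℝ) * n
        = ((2 * m + 1 : ℕ) : ℝ) * ((n : ℝ) / (2 * (2 * (ℓ : ℝ) + 1))) * (2 * (2 * (ℓ : ℝ) + 1)) := by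
          field_simp
      _ ≤ 2 * n * (2 * (2 * (ℓ : ℝ) + 1)) := h
  have hfin : 2 * m + 1 ≤ 8 * ℓ + 4 := by
    by_contra hcon
    push_neg at hcon
    have hge : (8 * (ℓ : ℝ) + 5) ≤ ((2 * m + 1 : ℕ) : ℝ) := by
      push_cast
      have : (8 * ℓ + 5 : ℕ) ≤ 2 * m + 1 := hcon
      exact_mod_cast this
    have h5 : (8 * (ℓ : ℝ) + 5) * n ≤ (8 * (ℓ : ℝ) + 4) * n := by
      calc (8 * (ℓ : ℝ) + 5) * n ≤ ((2 * m + 1 : ℕ) : ℝ) * n :=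
            mul_le_mul_of_nonneg_right hge hn0R.le
        _ ≤ 2 * n * (2 * (2 * (ℓ : ℝ) + 1)) := hclear
        _ = (8 * (ℓ : ℝ) + 4) * n := by ring
    nlinarith [h5, hn0R]
  omega
end

section
/- Let 2 ≤ ℓ < k be integers, let G be a {C_3, C_5, …, C_{2ℓ−1}; C_{2k+1}}-free graph with shortest odd cycle C_{2m+1} = v_1v_2⋯v_{2m+1}v_1, and define G' and the sets S_i as in the setup. Then for every i ∈ {1,…,2m+1}, the graph G' contains no path with 2k vertices both of whose ends lie in S_i. -/
open SimpleGraph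

/-- Claim 2.4(i). Let `2 ≤ ℓ < k`, let `G` be a
`{C₃, C₅, …, C_{2ℓ−1}; C_{2k+1}}`-free graph with shortest odd cycle
`C_{2m+1} = v₁v₂⋯v_{2m+1}v₁`, and let `Sᵢ` be the neighbors of `vᵢ` in
`G' = G − V(C_{2m+1})`. Then for every `i`, the graph `G'` contains no path with `2k`
vertices both of whose ends lie in `Sᵢ`. -/
theorem no_long_path_both_ends_in_Si
    {V : Type*} (G : SimpleGraph V)
    (k ℓ m : ℕ) (hℓ : 2 ≤ ℓ) (hℓk : ℓ < k)
    (hfreeShort : ∀ a : ℕ, Odd a → 3 ≤ a → a < 2 * ℓ + 1 → ¬ HasNCycle G a)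
    (hfreeLong : ¬ HasNCycle G (2 * k + 1))
    (v : Fin (2 * m + 1) → V) (hinj : Function.Injective v)
    (hadj : ∀ i : Fin (2 * m + 1), G.Adj (v i) (v (i + 1)))
    (hshortest : ∀ a : ℕ, Odd a → a < 2 * m + 1 → ¬ HasNCycle G a)
    (S : Fin (2 * m + 1) → Set V)
    (hS : ∀ i, S i = {x | x ∉ Set.range v ∧ G.Adj (v i) x}) :
    ∀ i : Fin (2 * m + 1),
      ¬ ∃ (x y : V) (p : G.Walk x y), p.IsPath ∧ p.length + 1 = 2 * k ∧
          x ∈ S i ∧ y ∈ S i ∧ ∀ z ∈ p.support, z ∉ Set.range v := by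
  intro i h
  obtain ⟨x, y, p, hp, hlen, hx, hy, hav⟩ := h
  rw [hS] at hx hy
  obtain ⟨hxr, hxadj⟩ := hx
  obtain ⟨hyr, hyadj⟩ := hy
  have hvi : v i ∉ p.support := fun h => hav _ h ⟨i, rfl⟩
  have hxy : x ≠ y := by
    rintro rfl
    have : (⟨p, hp⟩ : G.Path x x) = SimpleGraph.Path.nil := SimpleGraph.Path.loop_eq _
    have : p = Walk.nil := congrArg Subtype.val this
    subst this
    simp at hlen
    omega
  set q : G.Walk x (v i) := p.concat hyadj.symm with hq
  have hqpath : q.IsPath := by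
    rw [Walk.isPath_def, hq, Walk.support_concat]
    rw [List.nodup_append]
    refine ⟨hp.support_nodup, List.nodup_singleton _, ?_⟩
    intro a ha b hb hab
    simp at hb
    subst hb
    exact hvi (hab ▸ ha)
  have hedge : s(v i, x) ∉ q.edges := by
    rw [hq, Walk.edges_concat]
    intro hmem
    rw [List.concat_eq_append, List.mem_append] at hmem
    rcases hmem with h1 | h2
    · exact hvi (p.fst_mem_support_of_mem_edges h1)
    · simp only [List.mem_singleton] at h2
      rw [Sym2.eq_iff] at h2
      rcases h2 with ⟨h, _⟩ | ⟨h, h'⟩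
      · exact hvi (h ▸ p.end_mem_support)
      · exact hxy h'
  apply hfreeLong
  refine ⟨v i, Walk.cons hxadj q, ?_, ?_⟩
  · exact (Walk.cons_isCycle_iff q hxadj).mpr ⟨hqpath, hedge⟩
  · simp [hq, Walk.length_concat]
    omega
end

section
/- Let 2 ≤ ℓ < k be integers, let G be a {C_3, C_5, …, C_{2ℓ−1}; C_{2k+1}}-free graph with shortest odd cycle C_{2m+1} = v_1v_2⋯v_{2m+1}v_1, and define G', the sets S_i, and the subpaths P_{ij}^{odd} with orders p_{ij}^{odd} as in the setup. Then for all i ≠ j in {1,…,2m+1}, the graph G' contains no path with 2k+1−p_{ij}^{odd} vertices having one end in S_i and the other end in S_j. -/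
open SimpleGraph

/-- The number of vertices of the subpath of the cycle `v_1 v_2 ⋯ v_c v_1` joining `v_i`
to `v_j` that has an odd number of vertices (the order `p_{ij}^{odd}` of `P_{ij}^{odd}`). -/
def pOdd {c : ℕ} (i j : Fin c) : ℕ :=
  if Odd ((j - i).val + 1) then (j - i).val + 1 else (i - j).val + 1

/-- The number of vertices of the subpath of the cycle `v_1 v_2 ⋯ v_c v_1` joining `v_i`
to `v_j` that has an even number of vertices (the order `p_{ij}^{even}` of `P_{ij}^{even}`). -/
def pEven {c : ℕ} (i j : Fin c) : ℕ :=
  if Even ((j - i).val + 1) then (j - i).val + 1 else (i - j).val + 1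

open Fin.NatCast

open Fin.CommRing in
private def walkAlong {V : Type*} (G : SimpleGraph V) {n : ℕ} (v : Fin (n+1) → V)
    (hadj : ∀ i, G.Adj (v i) (v (i+1))) :
    (i : Fin (n+1)) → (t : ℕ) → G.Walk (v i) (v (i + (t : Fin (n+1))))
  | _, 0 => Walk.nil.copy rfl (by simp)
  | i, (t+1) => (Walk.cons (hadj i) (walkAlong G v hadj (i+1) t)).copy rfl
      (by congr 1; push_cast; ring)

private lemma walkAlong_length {V : Type*} (G : SimpleGraph V) {n : ℕ} (v : Fin (n+1) → V)
    (hadj : ∀ i, G.Adj (v i) (v (i+1))) :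
    ∀ (i : Fin (n+1)) (t : ℕ), (walkAlong G v hadj i t).length = t
  | _, 0 => by simp [walkAlong]
  | i, (t+1) => by simp [walkAlong, walkAlong_length G v hadj (i+1) t]

open Fin.CommRing in
private lemma walkAlong_support {V : Type*} (G : SimpleGraph V) {n : ℕ} (v : Fin (n+1) → V)
    (hadj : ∀ i, G.Adj (v i) (v (i+1))) :
    ∀ (i : Fin (n+1)) (t : ℕ),
      (walkAlong G v hadj i t).support = (List.range (t+1)).map (fun (s : ℕ) => v (i + (s : Fin (n+1))))
  | i, 0 => by simp [walkAlong, List.range_succ]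
  | i, (t+1) => by
    rw [walkAlong, Walk.support_copy, Walk.support_cons,
      walkAlong_support G v hadj (i+1) t]
    conv_rhs => rw [List.range_succ_eq_map]
    rw [List.map_cons, List.map_map]
    congr 1
    · simp
    · apply List.map_congr_left
      intro s _
      simp only [Function.comp_apply]
      congr 1
      push_cast
      ring

open Fin.CommRing in
private lemma helper {V : Type*} (G : SimpleGraph V) (k m : ℕ)
    (hfreeLong : ¬ HasNCycle G (2 * k + 1))
    (v : Fin (2 * m + 1) → V) (hinj : Function.Injective v)
    (hadj : ∀ i : Fin (2 * m + 1), G.Adj (v i) (v (i + 1)))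
    (i j : Fin (2 * m + 1)) (hij : i ≠ j)
    (x y : V) (p : G.Walk x y) (hp : p.IsPath)
    (hlen : p.length + 1 = 2 * k + 1 - ((j - i).val + 1))
    (hx : x ∉ Set.range v) (hxadj : G.Adj (v i) x)
    (hy : y ∉ Set.range v) (hyadj : G.Adj (v j) y)
    (hsup : ∀ z ∈ p.support, z ∉ Set.range v) : False := by
  set t : ℕ := (j - i).val with ht
  have he : i + (t : Fin (2 * m + 1)) = j := by
    rw [ht, Fin.cast_val_eq_self]; ring
  have hij' : v (i + (t : Fin (2 * m + 1))) = v j := congrArg v he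
  let R : G.Walk (v i) (v j) := (walkAlong G v hadj i t).copy rfl hij'
  have hRsup : R.support = (List.range (t+1)).map (fun (s : ℕ) => v (i + (s : Fin (2*m+1)))) := by
    rw [Walk.support_copy, walkAlong_support]
  have hRrange : ∀ z ∈ R.support, z ∈ Set.range v := by
    intro z hz
    rw [hRsup] at hz
    obtain ⟨s, _, rfl⟩ := List.mem_map.mp hz
    exact ⟨_, rfl⟩
  have hRnodup : R.support.Nodup := by
    rw [hRsup]
    refine List.Nodup.map_on ?_ List.nodup_range
    intro s hs s' hs' hss
    rw [List.mem_range] at hs hs'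
    have ht2 : t < 2 * m + 1 := (j - i).isLt
    have := hinj hss
    have := add_left_cancel this
    have : ((s : Fin (2*m+1))).val = ((s' : Fin (2*m+1))).val := by rw [this]
    rwa [Fin.val_cast_of_lt (by omega), Fin.val_cast_of_lt (by omega)] at this
  have hRlen : R.length = t := by rw [Walk.length_copy, walkAlong_length]
  let Q : G.Walk y (v i) := Walk.cons hyadj.symm R.reverse
  let P' : G.Walk x (v i) := p.append Q
  have hP'path : P'.IsPath := by
    rw [Walk.isPath_def]
    show (p.append Q).support.Nodup
    rw [Walk.support_append]
    have : Q.support.tail = R.reverse.support := by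
      show (Walk.cons _ _).support.tail = _
      rw [Walk.support_cons]
      rfl
    rw [this, Walk.support_reverse]
    rw [List.nodup_append]
    refine ⟨hp.support_nodup, List.nodup_reverse.mpr hRnodup, ?_⟩
    intro z hz z' hz' hzz
    subst hzz
    exact hsup z hz (hRrange z (List.mem_reverse.mp hz'))
  have hedge : s(v i, x) ∉ P'.edges := by
    intro hmem
    rw [Walk.edges_append] at hmem
    rcases List.mem_append.mp hmem with h1 | h2
    · exact hsup (v i) (Walk.fst_mem_support_of_mem_edges p h1) ⟨i, rfl⟩
    · have : Q.edges = s(y, v j) :: R.reverse.edges := by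
        show (Walk.cons _ _).edges = _
        rw [Walk.edges_cons]
      rw [this] at h2
      rcases List.mem_cons.mp h2 with h3 | h4
      · rw [Sym2.eq_iff] at h3
        rcases h3 with ⟨h5, h6⟩ | ⟨h5, h6⟩
        · exact hy ⟨i, h5⟩
        · exact hij (hinj h5)
      · exact hx (hRrange x (by
          have := Walk.snd_mem_support_of_mem_edges R.reverse h4
          rwa [Walk.support_reverse, List.mem_reverse] at this))
  have hcyc : (Walk.cons hxadj P').IsCycle :=
    SimpleGraph.Path.cons_isCycle ⟨P', hP'path⟩ hxadj hedge
  have hQlen : Q.length = 1 + t := by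
    show (Walk.cons _ _).length = _
    rw [Walk.length_cons, Walk.length_reverse, hRlen]
    omega
  have hClen : (Walk.cons hxadj P').length = 2 * k + 1 := by
    rw [Walk.length_cons]
    show (p.append Q).length + 1 = _
    rw [Walk.length_append, hQlen]
    omega
  exact hfreeLong ⟨v i, Walk.cons hxadj P', hcyc, hClen⟩

/-- Claim 2.4(ii). Let `2 ≤ ℓ < k`, let `G` be a
`{C₃, C₅, …, C_{2ℓ−1}; C_{2k+1}}`-free graph with shortest odd cycle
`C_{2m+1} = v₁v₂⋯v_{2m+1}v₁`, and let `Sᵢ` be the neighbors of `vᵢ` in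
`G' = G − V(C_{2m+1})`. Then for all `i ≠ j`, the graph `G'` contains no path with
`2k + 1 − p_{ij}^{odd}` vertices having one end in `Sᵢ` and the other end in `Sⱼ`. -/
theorem no_long_path_ends_in_Si_Sj
    {V : Type*} (G : SimpleGraph V)
    (k ℓ m : ℕ) (hℓ : 2 ≤ ℓ) (hℓk : ℓ < k)
    (hfreeShort : ∀ a : ℕ, Odd a → 3 ≤ a → a < 2 * ℓ + 1 → ¬ HasNCycle G a)
    (hfreeLong : ¬ HasNCycle G (2 * k + 1))
    (v : Fin (2 * m + 1) → V) (hinj : Function.Injective v)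
    (hadj : ∀ i : Fin (2 * m + 1), G.Adj (v i) (v (i + 1)))
    (hshortest : ∀ a : ℕ, Odd a → a < 2 * m + 1 → ¬ HasNCycle G a)
    (S : Fin (2 * m + 1) → Set V)
    (hS : ∀ i, S i = {x | x ∉ Set.range v ∧ G.Adj (v i) x}) :
    ∀ i j : Fin (2 * m + 1), i ≠ j →
      ¬ ∃ (x y : V) (p : G.Walk x y), p.IsPath ∧ p.length + 1 = 2 * k + 1 - pOdd i j ∧
          x ∈ S i ∧ y ∈ S j ∧ ∀ z ∈ p.support, z ∉ Set.range v := by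
  intro i j hij
  rintro ⟨x, y, p, hp, hlen, hxS, hyS, hsup⟩
  rw [hS i] at hxS
  rw [hS j] at hyS
  obtain ⟨hx, hxadj⟩ := hxS
  obtain ⟨hy, hyadj⟩ := hyS
  by_cases hodd : Odd ((j - i).val + 1)
  · rw [pOdd, if_pos hodd] at hlen
    exact helper G k m hfreeLong v hinj hadj i j hij x y p hp hlen hx hxadj hy hyadj hsup
  · have h1 : (j - i) ≠ 0 := sub_ne_zero.mpr (Ne.symm hij)
    have h2 : (i - j) ≠ 0 := sub_ne_zero.mpr hij
    have hsum0 : (j - i) + (i - j) = 0 := by rw [sub_add_sub_cancel, sub_self]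
    have hmod : ((j - i).val + (i - j).val) % (2 * m + 1) = 0 := by
      rw [← Fin.val_add, hsum0, Fin.val_zero]
    have hv1 : (j - i).val ≠ 0 := fun h => h1 (Fin.ext (by simp [h]))
    have hv2 : (i - j).val ≠ 0 := fun h => h2 (Fin.ext (by simp [h]))
    have hlt1 : (j - i).val < 2 * m + 1 := Fin.isLt _
    have hlt2 : (i - j).val < 2 * m + 1 := Fin.isLt _
    have hsum : (j - i).val + (i - j).val = 2 * m + 1 := by
      rcases Nat.lt_or_ge ((j - i).val + (i - j).val) (2 * m + 1) with h | h
      · rw [Nat.mod_eq_of_lt h] at hmod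
        omega
      · rw [Nat.mod_eq_sub_mod h, Nat.mod_eq_of_lt (by omega)] at hmod
        omega
    have hodd' : Odd ((i - j).val + 1) := by
      rw [Nat.odd_iff] at hodd ⊢
      omega
    rw [pOdd, if_neg hodd] at hlen
    have hlen' : p.reverse.length + 1 = 2 * k + 1 - ((i - j).val + 1) := by
      rwa [Walk.length_reverse]
    have hsup' : ∀ z ∈ p.reverse.support, z ∉ Set.range v := by
      intro z hz
      exact hsup z (by rwa [Walk.support_reverse, List.mem_reverse] at hz)
    exact helper G k m hfreeLong v hinj hadj j i hij.symm y x p.reverse hp.reverse hlen'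
      hy hyadj hx hxadj hsup'
end
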